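/- Let P = P₀⋯P_ℓ be a composition of commuting endomorphisms. Then P admits a decomposition (i.e. an α-decomposition with α = {J ⊆ L : |J| = 1}) if and only if every pair P_i, P_j with i ≠ j is relatively invertible, i.e. there exist Q_{i,j} ∈ End(V) commuting with all P_k such that id_V = Q_{i,j} P_i + Q_{j,i} P_j for all i ≠ j. -/
import Mathlib


open Finset

/-- The product `∏_{j ∈ s} P j` of a family of pairwise commuting endomorphisms. -/
def prodOver {R : Type*} [Monoid R] {n : ℕ} (P : Fin n → R)
    (hP : ∀ i j, Commute (P i) (P j)) (s : Finset (Fin n)) : R :=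
  s.noncommProd P fun a _ b _ _ => hP a b

lemma commute_prodOver {R : Type*} [Monoid R] {n : ℕ} (P : Fin n → R)
    (hP : ∀ i j, Commute (P i) (P j)) (s : Finset (Fin n)) {x : R}
    (hx : ∀ k, Commute x (P k)) : Commute x (prodOver P hP s) :=
  Finset.noncommProd_commute _ _ _ _ fun k _ => hx k

lemma prodOver_erase_mul {R : Type*} [Monoid R] {n : ℕ} (P : Fin n → R)
    (hP : ∀ i j, Commute (P i) (P j)) {s : Finset (Fin n)} {i : Fin n} (hi : i ∈ s) :
    prodOver P hP (s.erase i) * P i = prodOver P hP s :=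
  Finset.noncommProd_erase_mul s hi P _

lemma mul_shuffle {M : Type*} [Semigroup M] {b c : M} (h : Commute b c) (a d : M) :
    a * b * (c * d) = a * c * (b * d) := by
  rw [mul_assoc, mul_assoc, ← mul_assoc b, h.eq, mul_assoc]

/-- `P = P₀⋯P_ℓ` admits a decomposition
(`id_V = Σ_i Q_i P^i` with `Q_i` commuting with all `P_j`, `P^i = ∏_{j≠i} P_j`)
iff every pair `P_i, P_j`, `i ≠ j`, is relatively invertible: there are
`Q_{i,j}` commuting with all `P_k` with `id_V = Q_{i,j}P_i + Q_{j,i}P_j`. -/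
theorem statement13 {F V : Type*} [Field F] [AddCommGroup V] [Module F V]
    (ℓ : ℕ) (P : Fin (ℓ + 1) → Module.End F V)
    (hP : ∀ i j, Commute (P i) (P j)) :
    (∃ Q : Fin (ℓ + 1) → Module.End F V,
      (∀ i j, Commute (Q i) (P j)) ∧
      ∑ i : Fin (ℓ + 1), Q i * prodOver P hP (Finset.univ.erase i) = 1) ↔
    (∃ Q : Fin (ℓ + 1) → Fin (ℓ + 1) → Module.End F V,
      ∀ i j, i ≠ j →
        (∀ k, Commute (Q i j) (P k)) ∧
        Q i j * P i + Q j i * P j = 1) := by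
  constructor
  · rintro ⟨Q, hQcomm, hQsum⟩
    refine ⟨fun i j => if i < j then
        ∑ k ∈ Finset.univ.erase i, Q k * prodOver P hP ((Finset.univ.erase k).erase i)
      else Q j * prodOver P hP ((Finset.univ.erase j).erase i), ?_⟩
    have hcomm : ∀ i j k, Commute
        ((if i < j then
            ∑ k ∈ Finset.univ.erase i, Q k * prodOver P hP ((Finset.univ.erase k).erase i)
          else Q j * prodOver P hP ((Finset.univ.erase j).erase i))) (P k) := by
      intro i j k
      split
      · exact Commute.sum_left _ _ _ fun m _ =>
          ((hQcomm m k).mul_left (commute_prodOver P hP _ (hP k)).symm)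
      · exact (hQcomm j k).mul_left (commute_prodOver P hP _ (hP k)).symm
    have key : ∀ i j : Fin (ℓ + 1), i < j →
        (if i < j then
            ∑ k ∈ Finset.univ.erase i, Q k * prodOver P hP ((Finset.univ.erase k).erase i)
          else Q j * prodOver P hP ((Finset.univ.erase j).erase i)) * P i +
        (if j < i then
            ∑ k ∈ Finset.univ.erase j, Q k * prodOver P hP ((Finset.univ.erase k).erase j)
          else Q i * prodOver P hP ((Finset.univ.erase i).erase j)) * P j = 1 := by
      intro i j hij
      rw [if_pos hij, if_neg (not_lt.2 hij.le)]
      have h1 : (∑ k ∈ Finset.univ.erase i,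
            Q k * prodOver P hP ((Finset.univ.erase k).erase i)) * P i =
          ∑ k ∈ Finset.univ.erase i, Q k * prodOver P hP (Finset.univ.erase k) := by
        rw [Finset.sum_mul]
        refine Finset.sum_congr rfl fun k hk => ?_
        have hik : i ∈ Finset.univ.erase k :=
          Finset.mem_erase.2 ⟨(Finset.ne_of_mem_erase hk).symm, Finset.mem_univ i⟩
        rw [mul_assoc, prodOver_erase_mul P hP hik]
      have h2 : Q i * prodOver P hP ((Finset.univ.erase i).erase j) * P j =
          Q i * prodOver P hP (Finset.univ.erase i) := by
        have hji : j ∈ Finset.univ.erase i :=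
          Finset.mem_erase.2 ⟨hij.ne', Finset.mem_univ j⟩
        rw [mul_assoc, prodOver_erase_mul P hP hji]
      rw [h1, h2, Finset.sum_erase_add _ _ (Finset.mem_univ i), hQsum]
    intro i j hij
    refine ⟨hcomm i j, ?_⟩
    rcases hij.lt_or_gt with h | h
    · exact key i j h
    · rw [add_comm]; exact key j i h
  · rintro ⟨Q, h⟩
    have main : ∀ (s : Finset (Fin (ℓ + 1))), s.Nonempty →
        ∃ R : Fin (ℓ + 1) → Module.End F V,
          (∀ i k, Commute (R i) (P k)) ∧
          ∑ i ∈ s, R i * prodOver P hP (s.erase i) = 1 := by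
      intro s hs
      induction hs using Finset.Nonempty.cons_induction with
      | singleton a =>
          refine ⟨fun _ => 1, fun _ _ => Commute.one_left _, ?_⟩
          simp [prodOver]
      | cons a s ha hs ih =>
          obtain ⟨R, hRcomm, hRsum⟩ := ih
          refine ⟨fun i => if i = a then ∑ j ∈ s, R j * Q j a else R i * Q a i, ?_, ?_⟩
          · intro i k
            dsimp only
            by_cases hia : i = a
            · rw [if_pos hia]
              subst hia
              refine Commute.sum_left _ _ _ fun m hm => ?_
              have hma : m ≠ i := fun hmeq => ha (hmeq ▸ hm)
              exact (hRcomm m k).mul_left ((h m i hma).1 k)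
            · rw [if_neg hia]
              exact (hRcomm i k).mul_left ((h a i (Ne.symm hia)).1 k)
          · dsimp only
            simp only [Finset.cons_eq_insert]
            rw [Finset.sum_insert ha, Finset.erase_insert ha]
            have hterm : ∀ i ∈ s,
                R i * Q i a * prodOver P hP s +
                  R i * Q a i * prodOver P hP ((insert a s).erase i) =
                R i * prodOver P hP (s.erase i) := by
              intro i hi
              have hia : i ≠ a := fun hieq => ha (hieq ▸ hi)
              have hpair := (h i a hia).2
              have c1 : Commute (Q i a) (prodOver P hP (s.erase i)) :=
                commute_prodOver P hP _ ((h i a hia).1)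
              have c3 : Commute (Q a i) (prodOver P hP (s.erase i)) :=
                commute_prodOver P hP _ ((h a i (Ne.symm hia)).1)
              have c2 : Commute (P a) (prodOver P hP (s.erase i)) :=
                commute_prodOver P hP _ (hP a)
              have he : (insert a s).erase i = insert a (s.erase i) :=
                Finset.erase_insert_of_ne (Ne.symm hia)
              have hpr : prodOver P hP ((insert a s).erase i) =
                  P a * prodOver P hP (s.erase i) := by
                rw [he]
                exact Finset.noncommProd_insert_of_notMem _ _ _ _
                  fun hmem => ha (Finset.mem_of_mem_erase hmem)
              rw [hpr, ← prodOver_erase_mul P hP hi,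
                mul_shuffle c1, c2.eq, mul_shuffle c3,
                ← mul_add, hpair, mul_one]
            calc (if a = a then ∑ j ∈ s, R j * Q j a else R a * Q a a) * prodOver P hP s +
                  ∑ i ∈ s, (if i = a then ∑ j ∈ s, R j * Q j a else R i * Q a i) *
                    prodOver P hP ((insert a s).erase i)
                = ∑ i ∈ s, (R i * Q i a * prodOver P hP s +
                    R i * Q a i * prodOver P hP ((insert a s).erase i)) := by
                  rw [if_pos rfl, Finset.sum_mul, ← Finset.sum_add_distrib]
                  refine Finset.sum_congr rfl fun i hi => ?_
                  have hia : i ≠ a := fun hieq => ha (hieq ▸ hi)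
                  rw [if_neg hia]
              _ = ∑ i ∈ s, R i * prodOver P hP (s.erase i) :=
                  Finset.sum_congr rfl hterm
              _ = 1 := hRsum
    obtain ⟨R, hRcomm, hRsum⟩ := main Finset.univ ⟨0, Finset.mem_univ 0⟩
    exact ⟨R, fun i j => hRcomm i j, hRsum⟩
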